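/- (Barron's bound / Maurey–Jones–Barron.) Let P be a σ-finite measure on X ⊆ ℝ^m, let φ : X × V → ℝ with V ⊆ ℝ^d be such that G := { φ(·;v) : v ∈ V } is a bounded subset of L²(P) with C := sup_{g ∈ G} ‖g‖_{L²(P)} < ∞, and let μ be a finite complex Borel measure on V with total variation norm ‖μ‖_{TV} := |μ|(V). Let f := S[μ] := ∫_V φ(·;v) dμ(v), which satisfies ‖f‖_{L²(P)} ≤ C ‖μ‖_{TV}. Then for every p ∈ ℕ, the L²(P)-distance from f to the set of p-term linear combinations of elements of G satisfies dist_{L²(P)}(f, span_p G) ≤ √( (C² ‖μ‖_{TV}² − ‖f‖_{L²(P)}²) / p ), where span_p G := { Σ_{j=1}^p w_j g_j : w_j ∈ ℂ, g_j ∈ G }. -/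

import Mathlib

open MeasureTheory

open scoped InnerProductSpace in
lemma barron_key_step {α : Type*} [MeasurableSpace α] {Q : Measure α} [IsProbabilityMeasure Q]
    {H : Type*} [NormedAddCommGroup H] [InnerProductSpace ℂ H] [CompleteSpace H]
    {g : α → H} (hg : Integrable g Q) {C : ℝ} (hgC : ∀ᵐ v ∂Q, ‖g v‖ ≤ C)
    (a : H) (c : ℝ) :
    ∃ v : α, ‖a + (c:ℂ) • (g v - ∫ w, g w ∂Q)‖^2
      ≤ ‖a‖^2 + c^2 * (C^2 - ‖∫ w, g w ∂Q‖^2) := by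
  set m := ∫ w, g w ∂Q with hm
  set h : α → H := fun v => g v - m with hh
  have hhi : Integrable h Q := hg.sub (integrable_const m)
  have hhmean : ∫ v, h v ∂Q = 0 := by
    simp [hh, integral_sub hg (integrable_const m), ← hm]
  -- pointwise expansion
  have hexp : ∀ v, ‖a + (c:ℂ) • h v‖^2
      = ‖a‖^2 + 2 * (c * RCLike.re (⟪a, h v⟫_ℂ)) + c^2 * ‖h v‖^2 := by
    intro v
    rw [@norm_add_sq ℂ, inner_smul_right, norm_smul]
    simp only [Complex.norm_real, mul_pow, sq_abs, RCLike.re_ofReal_mul, RCLike.re_to_complex, Complex.re_ofReal_mul, Real.norm_eq_abs]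
  -- integrability pieces
  have hinn : Integrable (fun v => RCLike.re (⟪a, h v⟫_ℂ)) Q := (hhi.const_inner a).re
  have hnorm2 : Integrable (fun v => ‖h v‖^2) Q := by
    refine Integrable.mono' (integrable_const ((C + ‖m‖)^2)) (hhi.norm.aestronglyMeasurable.pow 2) ?_
    filter_upwards [hgC] with v hv
    have h1 : ‖h v‖ ≤ C + ‖m‖ := (norm_sub_le _ _).trans (by gcongr)
    have h0 : (0:ℝ) ≤ ‖h v‖ := norm_nonneg _
    calc ‖‖h v‖^2‖ = ‖h v‖^2 := by rw [Real.norm_eq_abs, abs_of_nonneg (by positivity)]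
    _ ≤ (C + ‖m‖)^2 := by nlinarith
  have hF : Integrable (fun v => ‖a + (c:ℂ) • h v‖^2) Q := by
    have : (fun v => ‖a + (c:ℂ) • h v‖^2)
        = fun v => ‖a‖^2 + 2 * (c * RCLike.re (⟪a, h v⟫_ℂ)) + c^2 * ‖h v‖^2 :=
      funext hexp
    rw [this]
    exact ((integrable_const _).add ((hinn.const_mul c).const_mul 2)).add (hnorm2.const_mul _)
  -- value of the integral
  have hIinn : ∫ v, RCLike.re (⟪a, h v⟫_ℂ) ∂Q = 0 := by
    rw [integral_re (hhi.const_inner a), integral_inner hhi, hhmean, inner_zero_right]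
    simp
  have hg2 : Integrable (fun v => ‖g v‖^2) Q := by
    refine Integrable.mono' (integrable_const (C^2)) (hg.norm.aestronglyMeasurable.pow 2) ?_
    filter_upwards [hgC] with v hv
    have h0 : (0:ℝ) ≤ ‖g v‖ := norm_nonneg _
    calc ‖‖g v‖^2‖ = ‖g v‖^2 := by rw [Real.norm_eq_abs, abs_of_nonneg (by positivity)]
    _ ≤ C^2 := by nlinarith
  have hIg2 : ∫ v, ‖g v‖^2 ∂Q ≤ C^2 := by
    have : ∫ v, ‖g v‖^2 ∂Q ≤ ∫ _v, C^2 ∂Q := by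
      refine integral_mono_ae hg2 (integrable_const _) ?_
      filter_upwards [hgC] with v hv
      have h0 : (0:ℝ) ≤ ‖g v‖ := norm_nonneg _
      nlinarith
    simpa using this
  have hIh2 : ∫ v, ‖h v‖^2 ∂Q = (∫ v, ‖g v‖^2 ∂Q) - ‖m‖^2 := by
    have hexp2 : ∀ v, ‖h v‖^2 = ‖g v‖^2 - 2 * RCLike.re (⟪m, g v⟫_ℂ) + ‖m‖^2 := by
      intro v
      rw [hh]
      simp only
      rw [@norm_sub_sq ℂ, inner_re_symm]
    have hinn2 : Integrable (fun v => RCLike.re (⟪m, g v⟫_ℂ)) Q := (hg.const_inner m).re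
    have hIinn2 : ∫ v, RCLike.re (⟪m, g v⟫_ℂ) ∂Q = ‖m‖^2 := by
      rw [integral_re (hg.const_inner m), integral_inner hg, ← hm, ← @inner_self_eq_norm_sq ℂ]
    calc ∫ v, ‖h v‖^2 ∂Q
        = ∫ v, (‖g v‖^2 - 2 * RCLike.re (⟪m, g v⟫_ℂ) + ‖m‖^2) ∂Q := by
          exact integral_congr_ae (Filter.Eventually.of_forall hexp2)
      _ = (∫ v, ‖g v‖^2 ∂Q) - 2 * ‖m‖^2 + ‖m‖^2 := by
          have hsub : Integrable (fun v => ‖g v‖^2 - 2 * RCLike.re (⟪m, g v⟫_ℂ)) Q :=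
            hg2.sub (hinn2.const_mul 2)
          have hcm : Integrable (fun v => 2 * RCLike.re (⟪m, g v⟫_ℂ)) Q := hinn2.const_mul 2
          rw [integral_add hsub (integrable_const _), integral_sub hg2 hcm,
            integral_const_mul, hIinn2]
          simp
      _ = (∫ v, ‖g v‖^2 ∂Q) - ‖m‖^2 := by ring
  have hIF : ∫ v, ‖a + (c:ℂ) • h v‖^2 ∂Q ≤ ‖a‖^2 + c^2 * (C^2 - ‖m‖^2) := by
    calc ∫ v, ‖a + (c:ℂ) • h v‖^2 ∂Q
        = ∫ v, (‖a‖^2 + 2 * (c * RCLike.re (⟪a, h v⟫_ℂ)) + c^2 * ‖h v‖^2) ∂Q :=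
          integral_congr_ae (Filter.Eventually.of_forall hexp)
      _ = ‖a‖^2 + 2 * (c * ∫ v, RCLike.re (⟪a, h v⟫_ℂ) ∂Q) + c^2 * ∫ v, ‖h v‖^2 ∂Q := by
          have h1 : Integrable (fun v => c * RCLike.re (⟪a, h v⟫_ℂ)) Q := hinn.const_mul c
          have h2 : Integrable (fun v => 2 * (c * RCLike.re (⟪a, h v⟫_ℂ))) Q := h1.const_mul 2
          have h3 : Integrable (fun v => ‖a‖^2 + 2 * (c * RCLike.re (⟪a, h v⟫_ℂ))) Q :=
            (integrable_const _).add h2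
          have h4 : Integrable (fun v => c^2 * ‖h v‖^2) Q := hnorm2.const_mul _
          rw [integral_add h3 h4, integral_add (integrable_const _) h2,
            integral_const_mul, integral_const_mul, integral_const_mul]
          simp
      _ = ‖a‖^2 + c^2 * ((∫ v, ‖g v‖^2 ∂Q) - ‖m‖^2) := by rw [hIinn, hIh2]; ring
      _ ≤ ‖a‖^2 + c^2 * (C^2 - ‖m‖^2) := by
          have := sq_nonneg c
          nlinarith [hIg2]
  obtain ⟨v, hv⟩ := exists_le_integral hF
  exact ⟨v, hv.trans hIF⟩


set_option maxHeartbeats 1000000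

/-- **Barron's bound (Maurey–Jones–Barron).** Let `P` be a σ-finite measure on
`X ⊆ ℝ^m`, let `φ : X × V → ℝ` (with `V ⊆ ℝ^d`) be such that
`G = {φ(·;v) : v ∈ V}` is a bounded subset of `L²(P)` — the elements `Φ v ∈ L²(P)`
represent the functions `φ(·;v)` and satisfy `‖Φ v‖_{L²(P)} ≤ C` — and let the finite
complex Borel measure `μ` be given in polar form `μ = ρ · ν` (`ν = |μ|` finite,
`‖ρ‖ = 1` a.e., so `‖μ‖_TV = ν(V)`).  Let `f = S[μ] = ∫ φ(·;v) dμ(v)` (a Bochner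
integral in `L²(P)`), which satisfies `‖f‖_{L²(P)} ≤ C ‖μ‖_TV`.  Then for every `p ≥ 1`
the `L²(P)`-distance from `f` to `span_p G`, the set of `p`-term linear combinations
`∑_{j=1}^p w_j φ(·;v_j)` with `w_j ∈ ℂ`, `v_j ∈ V`, satisfies
`dist(f, span_p G) ≤ √((C²‖μ‖_TV² − ‖f‖²)/p)`. -/
theorem stmt_14 {m d : ℕ} (X : Set (Fin m → ℝ)) (V : Set (Fin d → ℝ))
    (P : Measure X) [SigmaFinite P]
    (φ : X → V → ℝ) (Φ : V → Lp ℂ 2 P)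
    (hφ : ∀ v : V, (Φ v : X → ℂ) =ᵐ[P] fun x => ((φ x v : ℝ) : ℂ))
    (C : ℝ) (hC : ∀ v : V, ‖Φ v‖ ≤ C)
    (ν : Measure V) [IsFiniteMeasure ν]
    (ρ : V → ℂ) (hρm : Measurable ρ) (hρ1 : ∀ᵐ v ∂ν, ‖ρ v‖ = 1)
    (hint : Integrable (fun v => ρ v • Φ v) ν)
    (f : Lp ℂ 2 P) (hf : f = ∫ v, ρ v • Φ v ∂ν)
    (p : ℕ) (hp : 0 < p) :
    ‖f‖ ≤ C * (ν Set.univ).toReal ∧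
      Metric.infDist f
          {g : Lp ℂ 2 P | ∃ (w : Fin p → ℂ) (vv : Fin p → V), g = ∑ j, w j • Φ (vv j)} ≤
        Real.sqrt ((C ^ 2 * (ν Set.univ).toReal ^ 2 - ‖f‖ ^ 2) / p) := by
  classical
  set g : V → Lp ℂ 2 P := fun v => ρ v • Φ v with hgdef
  have hgC : ∀ᵐ v ∂ν, ‖g v‖ ≤ C := by
    filter_upwards [hρ1] with v hv
    simp only [hgdef, norm_smul, hv, one_mul]
    exact hC v
  have h1 : ‖f‖ ≤ C * (ν Set.univ).toReal := by
    rw [hf]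
    calc ‖∫ v, g v ∂ν‖ ≤ ∫ v, ‖g v‖ ∂ν := norm_integral_le_integral_norm _
      _ ≤ ∫ _v, C ∂ν := integral_mono_ae hint.norm (integrable_const _) hgC
      _ = (ν Set.univ).toReal * C := by simp [integral_const, smul_eq_mul, Measure.real]
      _ = C * (ν Set.univ).toReal := mul_comm _ _
  refine ⟨h1, ?_⟩
  set S : Set (Lp ℂ 2 P) :=
    {g : Lp ℂ 2 P | ∃ (w : Fin p → ℂ) (vv : Fin p → V), g = ∑ j, w j • Φ (vv j)} with hS
  set t := (ν Set.univ).toReal with ht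
  by_cases hν0 : ν Set.univ = 0
  · have hν : ν = 0 := by rwa [Measure.measure_univ_eq_zero] at hν0
    have hf0 : f = 0 := by rw [hf, hν]; simp
    have ht0 : t = 0 := by rw [ht, hν0]; simp
    have hR : Real.sqrt ((C ^ 2 * t ^ 2 - ‖f‖ ^ 2) / p) = 0 := by
      rw [hf0, ht0]; simp
    rw [hR]
    by_cases hV : Nonempty V
    · obtain ⟨v0⟩ := hV
      have hmem : (0 : Lp ℂ 2 P) ∈ S := ⟨fun _ => 0, fun _ => v0, by simp⟩
      have h2 := Metric.infDist_le_dist_of_mem (x := f) hmem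
      simpa [hf0] using h2
    · have hSe : S = ∅ := by
        ext s
        simp only [hS, Set.mem_setOf_eq, Set.mem_empty_iff_false, iff_false, not_exists]
        intro w vv
        exact absurd ⟨vv ⟨0, hp⟩⟩ hV
      rw [hSe, Metric.infDist_empty]
  · haveI : NeZero ν := ⟨fun h => hν0 (by rw [h]; simp)⟩
    have htop : ν Set.univ ≠ ⊤ := measure_ne_top ν _
    have htpos : 0 < t := ENNReal.toReal_pos hν0 htop
    set Q : Measure V := (ν Set.univ)⁻¹ • ν with hQ
    haveI : IsProbabilityMeasure Q := MeasureTheory.isProbabilityMeasureSMul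
    have hgQ : Integrable g Q := hint.smul_measure (ENNReal.inv_ne_top.2 hν0)
    have hgCQ : ∀ᵐ v ∂Q, ‖g v‖ ≤ C := Measure.ae_smul_measure hgC _
    set m0 := ∫ w, g w ∂Q with hm0
    have hmf : m0 = t⁻¹ • f := by
      rw [hm0, hQ, integral_smul_measure, ENNReal.toReal_inv, hf, ht]
    have hfm : f = (t:ℂ) • m0 := by
      rw [hmf, Complex.coe_smul]
      exact (smul_inv_smul₀ htpos.ne' f).symm
    have hmn : ‖m0‖ = t⁻¹ * ‖f‖ := by
      rw [hmf, norm_smul, Real.norm_eq_abs, abs_of_pos (by positivity)]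
    set K := C ^ 2 * t ^ 2 - ‖f‖ ^ 2 with hK
    have hCt : 0 ≤ C * t := le_trans (norm_nonneg f) h1
    have hKnn : 0 ≤ K := by
      have := norm_nonneg f
      nlinarith [h1]
    have hstep : ∀ (a : Lp ℂ 2 P) (c : ℝ), ∃ v : V,
        ‖a + (c:ℂ) • (g v - m0)‖ ^ 2 ≤ ‖a‖ ^ 2 + c ^ 2 * (C ^ 2 - ‖m0‖ ^ 2) :=
      fun a c => barron_key_step hgQ hgCQ a c
    have hm2 : C ^ 2 - ‖m0‖ ^ 2 = (C ^ 2 * t ^ 2 - ‖f‖ ^ 2) / t ^ 2 := by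
      rw [hmn]
      field_simp
    have main : ∀ n : ℕ, 0 < n → ∃ vv : Fin n → V,
        ‖(∑ j, ((t / (n : ℝ) : ℝ) : ℂ) • g (vv j)) - f‖ ^ 2 ≤ K / n := by
      intro n hn
      induction n with
      | zero => omega
      | succ n ih =>
        by_cases hn0 : n = 0
        · subst hn0
          obtain ⟨v, hv⟩ := hstep 0 t
          refine ⟨fun _ => v, ?_⟩
          have he : (∑ j : Fin 1, ((t / ((1:ℕ) : ℝ) : ℝ) : ℂ) • g ((fun _ => v) j)) - f
              = 0 + (t:ℂ) • (g v - m0) := by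
            rw [hfm]
            simp [Fin.sum_univ_one, smul_sub]
          rw [he]
          refine hv.trans ?_
          rw [hm2]
          have ht2 : (t:ℝ) ^ 2 ≠ 0 := by positivity
          have hcanc : t ^ 2 * ((C ^ 2 * t ^ 2 - ‖f‖ ^ 2) / t ^ 2)
              = C ^ 2 * t ^ 2 - ‖f‖ ^ 2 := by field_simp
          rw [hcanc, hK]
          norm_num
        · obtain ⟨vv, hvv⟩ := ih (Nat.pos_of_ne_zero hn0)
          set A := ∑ j, ((t / (n : ℝ) : ℝ) : ℂ) • g (vv j) with hA
          obtain ⟨v, hv⟩ := hstep (((((n:ℝ) / ((n:ℝ)+1)) : ℝ) : ℂ) • (A - f)) (t / ((n:ℝ)+1))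
          refine ⟨Fin.snoc vv v, ?_⟩
          have hnR : ((n:ℝ)) ≠ 0 := Nat.cast_ne_zero.2 hn0
          have hn1 : ((n:ℝ)) + 1 ≠ 0 := by positivity
          have he : (∑ j : Fin (n+1), ((t / ((n+1 : ℕ) : ℝ) : ℝ) : ℂ) • g ((Fin.snoc vv v : Fin (n+1) → V) j)) - f
              = ((((n:ℝ) / ((n:ℝ)+1)) : ℝ) : ℂ) • (A - f)
                + ((t / ((n:ℝ)+1) : ℝ) : ℂ) • (g v - m0) := by
            have hpc : ((n+1 : ℕ) : ℝ) = (n : ℝ) + 1 := by push_cast; ring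
            have hsc : ∀ j : Fin n,
                ((((n:ℝ) / ((n:ℝ)+1)) : ℝ) : ℂ) • (((t / (n : ℝ) : ℝ) : ℂ) • g (vv j))
                = ((t / ((n:ℝ)+1) : ℝ) : ℂ) • g (vv j) := by
              intro j
              rw [smul_smul]
              congr 1
              have h1 : ((n:ℝ):ℂ) ≠ 0 := by exact_mod_cast Nat.cast_ne_zero.2 hn0
              have h2 : ((n:ℝ):ℂ) + 1 ≠ 0 := by
                intro hcon
                apply hn1
                exact_mod_cast congrArg Complex.re hcon
              push_cast at h1 h2 ⊢
              field_simp
            rw [Fin.sum_univ_castSucc]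
            simp only [Fin.snoc_castSucc, Fin.snoc_last]
            rw [hpc, hfm, hA, smul_sub, smul_sub, Finset.smul_sum,
              Finset.sum_congr rfl fun j _ => hsc j]
            have h2 : ((n:ℝ):ℂ) + 1 ≠ 0 := by
              intro hcon
              apply hn1
              exact_mod_cast congrArg Complex.re hcon
            match_scalars
            · push_cast
              ring
            · push_cast
              ring
            · push_cast at h2 ⊢
              field_simp
              ring
          rw [he]
          refine hv.trans ?_
          rw [norm_smul, hm2]
          have hnorm : ‖((((n:ℝ) / ((n:ℝ)+1)) : ℝ) : ℂ)‖ = (n:ℝ) / ((n:ℝ)+1) := by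
            rw [Complex.norm_real, Real.norm_eq_abs, abs_of_nonneg (by positivity)]
          rw [hnorm, mul_pow]
          have hAf : ‖A - f‖ ^ 2 ≤ K / n := hvv
          have hpc : ((n+1 : ℕ) : ℝ) = (n : ℝ) + 1 := by push_cast; ring
          rw [hpc]
          have hnpos : (0:ℝ) < n := by positivity
          have h2 : (t / ((n:ℝ)+1)) ^ 2 * ((C ^ 2 * t ^ 2 - ‖f‖ ^ 2) / t ^ 2)
              = K / ((n:ℝ)+1) ^ 2 := by
            rw [hK]
            field_simp
          rw [h2]
          have hAn : (0:ℝ) ≤ ‖A - f‖ ^ 2 := by positivity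
          calc ((n:ℝ) / ((n:ℝ)+1)) ^ 2 * ‖A - f‖ ^ 2 + K / ((n:ℝ)+1) ^ 2
              ≤ ((n:ℝ) / ((n:ℝ)+1)) ^ 2 * (K / n) + K / ((n:ℝ)+1) ^ 2 := by
                gcongr
              _ = K / ((n:ℝ)+1) := by
                field_simp
    obtain ⟨vv, hvv⟩ := main p hp
    set s := ∑ j, ((t / (p : ℝ) : ℝ) : ℂ) • g (vv j) with hs
    have hmem : s ∈ S := by
      refine ⟨fun j => ((t / (p : ℝ) : ℝ) : ℂ) * ρ (vv j), vv, ?_⟩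
      rw [hs]
      exact Finset.sum_congr rfl fun j _ => by rw [hgdef]; simp [smul_smul]
    calc Metric.infDist f S ≤ dist f s := Metric.infDist_le_dist_of_mem hmem
      _ = ‖s - f‖ := by rw [dist_eq_norm, norm_sub_rev]
      _ ≤ Real.sqrt (K / p) := by
          rw [← Real.sqrt_sq (norm_nonneg (s - f))]
          exact Real.sqrt_le_sqrt hvv
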